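/- Let p ∈ ℝ and define b_n by (1-r²)^{p/2} E(r) = (π/2) Σ_{n≥0} b_n r^{2n}, where E is the complete elliptic integral of the second kind. Then b_0 = 1, b_1 = -p/2 - 1/4, and for n ≥ 1, b_{n+1} = (1/4)·[(8n² - 4pn - 2p - 1)/(n+1)²]·b_n - (1/4)·[(2n-p-1)(2n-p-3)/(n+1)²]·b_{n-1}. -/

import Mathlib

open Polynomial

/-- Pochhammer symbol `(a)_n` for real `a`. -/
noncomputable def poch (a : ℝ) (n : ℕ) : ℝ := (ascPochhammer ℝ n).eval a

/-- Gaussian hypergeometric function `F(a,b;c;z)`. -/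
noncomputable def hypF (a b c z : ℝ) : ℝ :=
  ∑' n : ℕ, poch a n * poch b n / poch c n * z ^ n / n.factorial

/-- Complete elliptic integral of the second kind, `E(r) = (π/2) F(-1/2,1/2;1;r²)`. -/
noncomputable def ellE (r : ℝ) : ℝ := (Real.pi / 2) * hypF (-(1/2)) (1/2) 1 (r ^ 2)

noncomputable def ub (q : ℝ) : ℕ → ℝ
  | 0 => 1
  | k+1 => ub q k * ((k : ℝ) - q) / (k+1)

noncomputable def vb (n : ℕ) : ℝ :=
  poch (-(1/2)) n * poch (1/2) n / poch 1 n / n.factorial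

noncomputable def cseq (q : ℝ) (n : ℕ) : ℝ := ∑ k ∈ Finset.range (n+1), ub q k * vb (n-k)

section lemmas






lemma poch_zero (a : ℝ) : poch a 0 = 1 := by simp [poch]

lemma poch_succ (a : ℝ) (n : ℕ) : poch a (n+1) = poch a n * (a + n) := by
  simp [poch, ascPochhammer_succ_right]

lemma poch_one_eq (n : ℕ) : poch 1 n = n.factorial := by
  simp [poch, ascPochhammer_eval_one]

lemma vb_zero : vb 0 = 1 := by simp [vb, poch_zero]

lemma vb_succ (n : ℕ) : vb (n+1) = vb n * (((n:ℝ) - 1/2) * ((n:ℝ) + 1/2)) / ((n:ℝ)+1)^2 := by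
  have h1 : (n.factorial : ℝ) ≠ 0 := Nat.cast_ne_zero.2 n.factorial_ne_zero
  have h2 : ((n:ℝ) + 1) ≠ 0 := by positivity
  simp only [vb, poch_succ, poch_one_eq, Nat.factorial_succ, Nat.cast_mul, Nat.cast_add,
    Nat.cast_one]
  field_simp
  ring

lemma abs_vb_le_one (n : ℕ) : |vb n| ≤ 1 := by
  induction n with
  | zero => simp [vb_zero]
  | succ n ih =>
    rw [vb_succ, abs_div, abs_mul]
    have h2 : (0:ℝ) < ((n:ℝ)+1)^2 := by positivity
    rw [div_le_one (by simpa using h2)]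
    have key : |((n:ℝ) - 1/2) * ((n:ℝ) + 1/2)| ≤ ((n:ℝ)+1)^2 := by
      rw [abs_mul]
      have h3 : |(n:ℝ) - 1/2| ≤ (n:ℝ) + 1 := by
        rw [abs_le]; constructor <;> [nlinarith [Nat.cast_nonneg (α := ℝ) n]; nlinarith [Nat.cast_nonneg (α := ℝ) n]]
      have h4 : |(n:ℝ) + 1/2| ≤ (n:ℝ) + 1 := by
        rw [abs_le]; constructor <;> nlinarith [Nat.cast_nonneg (α := ℝ) n]
      calc |(n:ℝ) - 1/2| * |(n:ℝ) + 1/2| ≤ ((n:ℝ)+1) * ((n:ℝ)+1) :=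
            mul_le_mul h3 h4 (abs_nonneg _) (by positivity)
        _ = ((n:ℝ)+1)^2 := by ring
    calc |vb n| * |((n:ℝ) - 1/2) * ((n:ℝ) + 1/2)| ≤ 1 * (((n:ℝ)+1)^2) :=
          mul_le_mul ih key (abs_nonneg _) zero_le_one
      _ = _ := by rw [one_mul]; simp


lemma abs_ub_succ (q : ℝ) (k : ℕ) :
    |ub q (k+1)| = |ub q k| * |(k:ℝ) - q| / ((k:ℝ)+1) := by
  rw [show ub q (k+1) = ub q k * ((k : ℝ) - q) / (k+1) from rfl, abs_div, abs_mul]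
  congr 1
  exact abs_of_pos (by positivity)

lemma summable_ub_aux (q : ℝ) {ρ : ℝ} (h0 : 0 ≤ ρ) (h1 : ρ < 1) :
    Summable (fun k : ℕ => ((k:ℝ)+1) * |ub q k| * ρ^k) := by
  apply summable_of_ratio_norm_eventually_le (r := (1+ρ)/2) (by linarith)
  obtain ⟨N, hN⟩ := exists_nat_ge (6 * ρ * (|q| + 1) / (1 - ρ))
  filter_upwards [Filter.eventually_ge_atTop (max N 1)] with k hk
  have hk1 : 1 ≤ k := le_of_max_le_right hk
  have hkN : (N:ℝ) ≤ (k:ℝ) := Nat.cast_le.2 (le_of_max_le_left hk)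
  have hk' : 6 * ρ * (|q| + 1) ≤ (1 - ρ) * (k:ℝ) := by
    have := hN.trans hkN
    rw [div_le_iff₀ (by linarith)] at this
    linarith
  have hknn : (0:ℝ) ≤ (k:ℝ) := Nat.cast_nonneg k
  have hk1' : (1:ℝ) ≤ (k:ℝ) := by exact_mod_cast hk1
  have hub : (0:ℝ) ≤ |ub q k| * ρ^k := by positivity
  have habs : |(k:ℝ) - q| ≤ (k:ℝ) + |q| := by
    calc |(k:ℝ) - q| ≤ |(k:ℝ)| + |q| := abs_sub _ _
      _ = (k:ℝ) + |q| := by rw [abs_of_nonneg hknn]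
  have core : ((k:ℝ)+2) * |(k:ℝ) - q| * ρ / ((k:ℝ)+1) ≤ (1+ρ)/2 * ((k:ℝ)+1) := by
    rw [div_le_iff₀ (by positivity)]
    have h2 : ((k:ℝ)+2) * |(k:ℝ) - q| * ρ ≤ ((k:ℝ)+2) * ((k:ℝ) + |q|) * ρ := by
      apply mul_le_mul_of_nonneg_right _ h0
      apply mul_le_mul_of_nonneg_left habs (by linarith)
    have h3 : ((k:ℝ)+2) * ((k:ℝ) + |q|) * ρ ≤ (1+ρ)/2 * ((k:ℝ)+1) * ((k:ℝ)+1) := by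
      nlinarith [mul_le_mul_of_nonneg_right hk' hknn, abs_nonneg q,
        mul_nonneg h0 hknn, mul_nonneg (mul_nonneg h0 (abs_nonneg q)) hknn]
    linarith
  have e1 : ((k:ℝ)+1+1) * |ub q (k+1)| * ρ^(k+1)
      = (((k:ℝ)+2) * |(k:ℝ) - q| * ρ / ((k:ℝ)+1)) * (|ub q k| * ρ^k) := by
    rw [abs_ub_succ, pow_succ]
    field_simp
    ring
  have e2 : (1+ρ)/2 * (((k:ℝ)+1) * |ub q k| * ρ^k)
      = ((1+ρ)/2 * ((k:ℝ)+1)) * (|ub q k| * ρ^k) := by ring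
  rw [Real.norm_of_nonneg (by positivity), Real.norm_of_nonneg (by positivity)]
  push_cast
  rw [e1, e2]
  exact mul_le_mul_of_nonneg_right core hub

lemma summable_abs_ub (q : ℝ) {ρ : ℝ} (h0 : 0 ≤ ρ) (h1 : ρ < 1) :
    Summable (fun k : ℕ => |ub q k| * ρ^k) := by
  refine (summable_ub_aux q h0 h1).of_nonneg_of_le (fun k => by positivity) (fun k => ?_)
  nlinarith [abs_nonneg (ub q k), pow_nonneg h0 k, Nat.cast_nonneg (α := ℝ) k,
    mul_nonneg (abs_nonneg (ub q k)) (pow_nonneg h0 k)]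



lemma ub_succ_mul (q : ℝ) (k : ℕ) : ((k:ℝ)+1) * ub q (k+1) = ((k:ℝ) - q) * ub q k := by
  rw [show ub q (k+1) = ub q k * ((k : ℝ) - q) / (k+1) from rfl]
  field_simp

noncomputable def gfun (q x : ℝ) : ℝ := ∑' k : ℕ, ub q k * x^k

lemma summable_ub_pow (q : ℝ) {x : ℝ} (hx : |x| < 1) :
    Summable (fun k : ℕ => ub q k * x^k) := by
  apply Summable.of_norm
  have : ∀ k : ℕ, ‖ub q k * x^k‖ = |ub q k| * |x|^k := by
    intro k; rw [Real.norm_eq_abs, abs_mul, abs_pow]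
  simpa only [this] using summable_abs_ub q (abs_nonneg x) hx

lemma summable_kub_pow (q : ℝ) {x : ℝ} (hx : |x| < 1) :
    Summable (fun k : ℕ => (k:ℝ) * ub q k * x^k) := by
  apply Summable.of_norm
  have hle : ∀ k : ℕ, ‖(k:ℝ) * ub q k * x^k‖ ≤ ((k:ℝ)+1) * |ub q k| * |x|^k := by
    intro k
    rw [Real.norm_eq_abs, abs_mul, abs_mul, abs_pow, Nat.abs_cast]
    have h1 : (0:ℝ) ≤ |ub q k| * |x|^k := by positivity
    nlinarith [abs_nonneg (ub q k), pow_nonneg (abs_nonneg x) k]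
  exact Summable.of_nonneg_of_le (fun k => norm_nonneg _) hle
    (summable_ub_aux q (abs_nonneg x) hx)

lemma gfun_hasDerivAt (q : ℝ) {x : ℝ} (hx : |x| < 1) :
    HasDerivAt (gfun q) (∑' k : ℕ, ((k:ℝ)+1) * ub q (k+1) * x^k) x := by
  set ρ : ℝ := (1 + |x|)/2 with hρdef
  have hρpos : 0 < ρ := by positivity
  have hρ1 : ρ < 1 := by simp only [hρdef]; linarith [abs_nonneg x]
  have hxρ : |x| < ρ := by simp only [hρdef]; linarith
  set t : Set ℝ := Set.Ioo (-ρ) ρ with ht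
  have hto : IsOpen t := isOpen_Ioo
  have htc : IsPreconnected t := isPreconnected_Ioo
  have hxt : x ∈ t := by
    rw [ht, Set.mem_Ioo]; constructor <;> [linarith [neg_abs_le x]; linarith [le_abs_self x]]
  have h0t : (0:ℝ) ∈ t := by rw [ht, Set.mem_Ioo]; constructor <;> linarith
  set u : ℕ → ℝ := fun k => (1/ρ) * (((k:ℝ)+1) * |ub q k| * ρ^k) with hu
  have hus : Summable u := (summable_ub_aux q hρpos.le hρ1).mul_left _
  have hbound : ∀ (k : ℕ), ∀ y ∈ t, ‖ub q k * ((k:ℝ) * y^(k-1))‖ ≤ u k := by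
    intro k y hy
    have hyρ : |y| ≤ ρ := by
      rw [ht, Set.mem_Ioo] at hy; rw [abs_le]; constructor <;> linarith [hy.1, hy.2]
    match k with
    | 0 => simp [hu]; positivity
    | (j+1) =>
      rw [Real.norm_eq_abs, abs_mul, abs_mul, abs_pow]
      have h1 : |((j:ℕ)+1 : ℝ)| = (j:ℝ)+1 := by rw [abs_of_nonneg]; positivity
      have h2 : |y|^(j+1-1) ≤ ρ^j := by
        simpa using pow_le_pow_left₀ (abs_nonneg y) hyρ j
      have : u (j+1) = ((j:ℝ)+2) * |ub q (j+1)| * ρ^j := by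
        rw [hu]; simp only; rw [pow_succ]; push_cast; field_simp; ring
      rw [this]
      push_cast
      have hb : |ub q (j+1)| * (((j:ℝ)+1) * |y|^(j+1-1)) ≤ |ub q (j+1)| * (((j:ℝ)+2) * ρ^j) := by
        apply mul_le_mul_of_nonneg_left _ (abs_nonneg _)
        have := mul_le_mul_of_nonneg_left h2 (show (0:ℝ) ≤ (j:ℝ)+1 by positivity)
        nlinarith [pow_nonneg hρpos.le j]
      calc |ub q (j+1)| * (|((j:ℝ)+1)| * |y|^j)
          = |ub q (j+1)| * (((j:ℝ)+1) * |y|^(j+1-1)) := by rw [h1]; simp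
        _ ≤ |ub q (j+1)| * (((j:ℝ)+2) * ρ^j) := hb
        _ = ((j:ℝ)+2) * |ub q (j+1)| * ρ^j := by ring
  have hg : ∀ (k : ℕ), ∀ y ∈ t, HasDerivAt (fun z => ub q k * z^k) (ub q k * ((k:ℝ) * y^(k-1))) y :=
    fun k y _ => (hasDerivAt_pow k y).const_mul _
  have hg0 : Summable (fun k => ub q k * (0:ℝ)^k) := summable_ub_pow q (by simpa using zero_lt_one)
  have H := hasDerivAt_tsum_of_isPreconnected hus hto htc hg hbound h0t hg0 hxt
  have hsum_deriv : Summable (fun k : ℕ => ub q k * ((k:ℝ) * x^(k-1))) :=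
    Summable.of_norm_bounded hus (fun k => hbound k x hxt)
  have : (∑' k : ℕ, ub q k * ((k:ℝ) * x^(k-1))) = ∑' k : ℕ, ((k:ℝ)+1) * ub q (k+1) * x^k := by
    rw [Summable.tsum_eq_zero_add hsum_deriv]
    simp only [Nat.cast_zero, zero_mul, mul_zero, zero_add]
    congr 1
    funext k
    push_cast
    ring_nf
  rw [this] at H
  exact H

lemma gderiv_rel (q : ℝ) {x : ℝ} (hx : |x| < 1) :
    (1 - x) * (∑' k : ℕ, ((k:ℝ)+1) * ub q (k+1) * x^k) = -q * gfun q x := by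
  have hS1 : Summable (fun k : ℕ => (k:ℝ) * ub q k * x^k) := summable_kub_pow q hx
  have hS2 : Summable (fun k : ℕ => q * (ub q k * x^k)) := (summable_ub_pow q hx).mul_left q
  have hfun : (fun k : ℕ => ((k:ℝ)+1) * ub q (k+1) * x^k)
      = fun k : ℕ => (k:ℝ) * ub q k * x^k - q * (ub q k * x^k) := by
    funext k
    have := ub_succ_mul q k
    linear_combination x^k * this
  set D := ∑' k : ℕ, ((k:ℝ)+1) * ub q (k+1) * x^k with hD
  have h1 : D = (∑' k : ℕ, (k:ℝ) * ub q k * x^k) - q * gfun q x := by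
    rw [hD, hfun, Summable.tsum_sub hS1 hS2, tsum_mul_left]
    rfl
  have h2 : (∑' k : ℕ, (k:ℝ) * ub q k * x^k) = x * D := by
    rw [Summable.tsum_eq_zero_add hS1]
    simp only [Nat.cast_zero, zero_mul, zero_add]
    rw [hD, ← tsum_mul_left]
    congr 1
    funext k
    push_cast
    ring
  rw [h2] at h1
  linear_combination h1

lemma gfun_zero (q : ℝ) : gfun q 0 = 1 := by
  rw [gfun, Summable.tsum_eq_zero_add (summable_ub_pow q (by simpa using zero_lt_one))]
  simp [show ub q 0 = 1 from rfl]

theorem gfun_eq_rpow (q : ℝ) {x : ℝ} (hx : |x| < 1) : gfun q x = (1-x) ^ q := by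
  have key : ∀ y ∈ Set.Ioo (-1:ℝ) 1, HasDerivAt (fun z => gfun q z * (1-z)^(-q)) 0 y := by
    intro y hy
    obtain ⟨hy1, hy2⟩ := hy
    have hy' : |y| < 1 := abs_lt.2 ⟨hy1, hy2⟩
    have h1y : (0:ℝ) < 1 - y := by linarith
    have hg := gfun_hasDerivAt q hy'
    set D := ∑' k : ℕ, ((k:ℝ)+1) * ub q (k+1) * y^k with hDdef
    have hc : HasDerivAt (fun z : ℝ => 1 - z) (-1) y := (hasDerivAt_id y).const_sub 1
    have h := Real.hasDerivAt_rpow_const (x := 1-y) (p := -q) (Or.inl h1y.ne')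
    have hrp : HasDerivAt (fun z => (1-z)^(-q)) (q * (1-y)^(-q-1)) y := by
      have := h.comp y hc
      rw [show q * (1-y)^(-q-1) = -q * (1-y)^(-q-1) * -1 by ring]
      exact this
    have hprod := hg.mul hrp
    have hrel := gderiv_rel q hy'
    have hsplit : (1-y)^(-q) = (1-y)^(-q-1) * (1-y) := by
      rw [← Real.rpow_add_one h1y.ne' (-q-1)]
      ring_nf
    have hzero : D * (1-y)^(-q) + gfun q y * (q * (1-y)^(-q-1)) = 0 := by
      rw [hsplit]
      linear_combination (1-y)^(-q-1) * hrel
    rw [hzero] at hprod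
    exact hprod
  have hx1 : -1 < x := neg_lt_of_abs_lt hx
  have hx2 : x < 1 := lt_of_abs_lt hx
  have hF0 : gfun q 0 * (1-(0:ℝ))^(-q) = 1 := by
    rw [gfun_zero]; simp
  have hconst : gfun q x * (1-x)^(-q) = 1 := by
    rcases le_or_gt 0 x with h0x | h0x
    · have := constant_of_has_deriv_right_zero
        (f := fun z => gfun q z * (1-z)^(-q)) (a := 0) (b := x)
        (fun z hz => ((key z ⟨by linarith [hz.1], by linarith [hz.2]⟩).continuousAt).continuousWithinAt)
        (fun z hz => ((key z ⟨by linarith [hz.1], by linarith [hz.2]⟩).hasDerivWithinAt))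
        x (Set.mem_Icc.2 ⟨h0x, le_refl x⟩)
      have h' : gfun q x * (1-x)^(-q) = gfun q 0 * (1-(0:ℝ))^(-q) := this
      rw [hF0] at h'
      exact h'
    · have := constant_of_has_deriv_right_zero
        (f := fun z => gfun q z * (1-z)^(-q)) (a := x) (b := 0)
        (fun z hz => ((key z ⟨by linarith [hz.1], by linarith [hz.2]⟩).continuousAt).continuousWithinAt)
        (fun z hz => ((key z ⟨by linarith [hz.1], by linarith [hz.2]⟩).hasDerivWithinAt))
        0 (Set.mem_Icc.2 ⟨h0x.le, le_refl 0⟩)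
      have h' : gfun q 0 * (1-(0:ℝ))^(-q) = gfun q x * (1-x)^(-q) := this
      rw [hF0] at h'
      exact h'.symm
  have h1x : (0:ℝ) < 1 - x := by linarith
  have hne : (1-x)^q ≠ 0 := (Real.rpow_pos_of_pos h1x q).ne'
  rw [Real.rpow_neg h1x.le] at hconst
  field_simp at hconst
  exact hconst



lemma hypF_eq_tsum_vb (x : ℝ) : hypF (-(1/2)) (1/2) 1 x = ∑' n : ℕ, vb n * x^n := by
  unfold hypF vb
  congr 1
  funext n
  ring

lemma summable_norm_vb {x : ℝ} (hx : |x| < 1) :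
    Summable (fun n : ℕ => ‖vb n * x^n‖) := by
  refine Summable.of_nonneg_of_le (fun n => norm_nonneg _) (fun n => ?_)
    (summable_geometric_of_lt_one (abs_nonneg x) hx)
  rw [Real.norm_eq_abs, abs_mul, abs_pow]
  nlinarith [abs_vb_le_one n, pow_nonneg (abs_nonneg x) n, abs_nonneg (vb n)]

lemma summable_norm_ub (q : ℝ) {x : ℝ} (hx : |x| < 1) :
    Summable (fun n : ℕ => ‖ub q n * x^n‖) := by
  have := summable_abs_ub q (abs_nonneg x) hx
  refine this.congr (fun n => ?_)
  rw [Real.norm_eq_abs, abs_mul, abs_pow]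

lemma hasSum_cseq (q : ℝ) {x : ℝ} (hx : |x| < 1) :
    HasSum (fun n : ℕ => cseq q n * x^n)
      ((1-x)^q * hypF (-(1/2)) (1/2) 1 x) := by
  have H := hasSum_sum_range_mul_of_summable_norm
    (f := fun k => ub q k * x^k) (g := fun m => vb m * x^m)
    (summable_norm_ub q hx) (summable_norm_vb hx)
  have hterm : ∀ n : ℕ, (∑ k ∈ Finset.range (n+1), (ub q k * x^k) * (vb (n-k) * x^(n-k)))
      = cseq q n * x^n := by
    intro n
    rw [cseq, Finset.sum_mul]
    apply Finset.sum_congr rfl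
    intro k hk
    have hkn : k ≤ n := Nat.lt_succ_iff.1 (Finset.mem_range.1 hk)
    have : x^k * x^(n-k) = x^n := by
      rw [← pow_add, Nat.add_sub_cancel' hkn]
    calc (ub q k * x^k) * (vb (n-k) * x^(n-k)) = ub q k * vb (n-k) * (x^k * x^(n-k)) := by ring
      _ = ub q k * vb (n-k) * x^n := by rw [this]
  rw [show (fun n : ℕ => ∑ k ∈ Finset.range (n+1), (ub q k * x^k) * (vb (n-k) * x^(n-k)))
      = fun n => cseq q n * x^n from funext hterm] at H
  -- identify the sum value
  have hval : (∑' k : ℕ, ub q k * x^k) * (∑' m : ℕ, vb m * x^m)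
      = (1-x)^q * hypF (-(1/2)) (1/2) 1 x := by
    rw [hypF_eq_tsum_vb]
    congr 1
    exact gfun_eq_rpow q hx
  rw [hval] at H
  exact H


noncomputable def Us (q : ℝ) : PowerSeries ℝ := PowerSeries.mk (ub q)
noncomputable def Vs : PowerSeries ℝ := PowerSeries.mk vb

lemma vb_succ_mul (n : ℕ) : ((n:ℝ)+1)^2 * vb (n+1) = (((n:ℝ) - 1/2) * ((n:ℝ) + 1/2)) * vb n := by
  rw [vb_succ]
  field_simp

lemma coeff_UV (q : ℝ) (n : ℕ) : PowerSeries.coeff n (Us q * Vs) = cseq q n := by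
  rw [PowerSeries.coeff_mul, Finset.Nat.sum_antidiagonal_eq_sum_range_succ_mk, cseq]
  simp [Us, Vs, PowerSeries.coeff_mk]

lemma hUq (q : ℝ) : (1 - PowerSeries.X) * (PowerSeries.derivative ℝ) (Us q) + PowerSeries.C q * Us q = 0 := by
  ext n
  have expand : (1 - PowerSeries.X) * (PowerSeries.derivative ℝ) (Us q) + PowerSeries.C q * Us q
      = (PowerSeries.derivative ℝ) (Us q) - PowerSeries.X * (PowerSeries.derivative ℝ) (Us q) + PowerSeries.C q * Us q := by ring
  rw [expand]
  cases n with
  | zero =>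
    simp only [map_add, map_sub, map_zero, PowerSeries.coeff_zero_eq_constantCoeff,
      map_mul, PowerSeries.constantCoeff_X, zero_mul, sub_zero]
    have h0 := ub_succ_mul q 0
    have e1 : PowerSeries.constantCoeff ((PowerSeries.derivative ℝ) (Us q)) = ub q 1 := by
      rw [← PowerSeries.coeff_zero_eq_constantCoeff, PowerSeries.coeff_derivative, Us,
        PowerSeries.coeff_mk]
      push_cast; ring
    have e2 : PowerSeries.constantCoeff (Us q) = ub q 0 := by
      rw [← PowerSeries.coeff_zero_eq_constantCoeff, Us, PowerSeries.coeff_mk]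
    rw [e1, PowerSeries.constantCoeff_C, e2]
    simp only [Nat.cast_zero] at h0
    linarith [h0]
  | succ k =>
    simp only [map_add, map_sub, map_zero, PowerSeries.coeff_succ_X_mul,
      PowerSeries.coeff_derivative, PowerSeries.coeff_C_mul, Us, PowerSeries.coeff_mk]
    have h1 := ub_succ_mul q (k+1)
    push_cast at h1 ⊢
    linarith [h1]

lemma hVq : (4 : PowerSeries ℝ) * (PowerSeries.X * ((1 - PowerSeries.X) * (PowerSeries.derivative ℝ) ((PowerSeries.derivative ℝ) Vs)))
    + 4 * ((1 - PowerSeries.X) * (PowerSeries.derivative ℝ) Vs) + Vs = 0 := by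
  set dV := (PowerSeries.derivative ℝ) Vs with hdV
  set ddV := (PowerSeries.derivative ℝ) dV with hddV
  have expand : (4 : PowerSeries ℝ) * (PowerSeries.X * ((1 - PowerSeries.X) * ddV)) + 4 * ((1 - PowerSeries.X) * dV) + Vs
      = 4 * (PowerSeries.X * ddV) - 4 * (PowerSeries.X * (PowerSeries.X * ddV)) + 4 * dV - 4 * (PowerSeries.X * dV) + Vs := by ring
  rw [expand]
  ext n
  have cdd : ∀ m : ℕ, PowerSeries.coeff m ddV = vb (m+2) * (m+2) * (m+1) := by
    intro m
    rw [hddV, PowerSeries.coeff_derivative, hdV, PowerSeries.coeff_derivative, Vs,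
      PowerSeries.coeff_mk]
    push_cast; ring
  have cd : ∀ m : ℕ, PowerSeries.coeff m dV = vb (m+1) * (m+1) := by
    intro m
    rw [hdV, PowerSeries.coeff_derivative, Vs, PowerSeries.coeff_mk]
  have c4 : ∀ (m : ℕ) (f : PowerSeries ℝ), PowerSeries.coeff m ((4:PowerSeries ℝ) * f)
      = 4 * PowerSeries.coeff m f := by
    intro m f
    have : (4:PowerSeries ℝ) = PowerSeries.C 4 := by simp [map_ofNat]
    rw [this, PowerSeries.coeff_C_mul]
  have cX0 : ∀ f : PowerSeries ℝ, PowerSeries.coeff 0 (PowerSeries.X * f) = 0 := by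
    intro f
    simp [PowerSeries.coeff_zero_eq_constantCoeff]
  cases n with
  | zero =>
    simp only [map_add, map_sub, map_zero, c4, cX0, mul_zero, sub_zero, zero_add, add_zero]
    have e1 : PowerSeries.coeff 0 dV = vb 1 := by rw [cd 0]; push_cast; ring
    have e2 : PowerSeries.coeff 0 Vs = vb 0 := by rw [Vs, PowerSeries.coeff_mk]
    rw [e1, e2, vb_zero]
    have h0 := vb_succ_mul 0
    rw [vb_zero] at h0
    push_cast at h0
    linarith [h0]
  | succ k =>
    simp only [map_add, map_sub, map_zero, c4, PowerSeries.coeff_succ_X_mul, cdd, cd]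
    have e3 : PowerSeries.coeff (k+1) Vs = vb (k+1) := by rw [Vs, PowerSeries.coeff_mk]
    rw [e3]
    cases k with
    | zero =>
      rw [cX0]
      have h1 := vb_succ_mul 1
      have h0 := vb_succ_mul 0
      push_cast at h1 h0 ⊢
      linarith [h1, h0]
    | succ j =>
      rw [PowerSeries.coeff_succ_X_mul, cdd j]
      have h1 := vb_succ_mul (j+2)
      have h2 := vb_succ_mul (j+1)
      push_cast at h1 h2 ⊢
      linarith [h1, h2]

lemma hU2q (q : ℝ) : (1 - PowerSeries.X) * (PowerSeries.derivative ℝ) ((PowerSeries.derivative ℝ) (Us q)) - (PowerSeries.derivative ℝ) (Us q)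
    + PowerSeries.C q * (PowerSeries.derivative ℝ) (Us q) = 0 := by
  have h := congrArg (⇑(PowerSeries.derivative ℝ)) (hUq q)
  rw [map_zero, map_add, Derivation.leibniz, Derivation.leibniz, map_sub,
    Derivation.map_one_eq_zero, PowerSeries.derivative_X, PowerSeries.derivative_C] at h
  simp only [smul_eq_mul] at h
  linear_combination h

lemma hC1 (q : ℝ) : (PowerSeries.derivative ℝ) (Us q * Vs) = Us q * (PowerSeries.derivative ℝ) Vs + Vs * (PowerSeries.derivative ℝ) (Us q) := by
  rw [Derivation.leibniz]
  simp only [smul_eq_mul]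

lemma hC2 (q : ℝ) : (PowerSeries.derivative ℝ) ((PowerSeries.derivative ℝ) (Us q * Vs))
    = Us q * (PowerSeries.derivative ℝ) ((PowerSeries.derivative ℝ) Vs) + 2 * ((PowerSeries.derivative ℝ) (Us q) * (PowerSeries.derivative ℝ) Vs)
      + Vs * (PowerSeries.derivative ℝ) ((PowerSeries.derivative ℝ) (Us q)) := by
  rw [hC1, map_add, Derivation.leibniz, Derivation.leibniz]
  simp only [smul_eq_mul]
  ring_nf

lemma hODE (q : ℝ) :
    PowerSeries.C 4 * (PowerSeries.X * (PowerSeries.derivative ℝ) ((PowerSeries.derivative ℝ) (Us q * Vs)))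
    + PowerSeries.C (-8) * (PowerSeries.X * (PowerSeries.X * (PowerSeries.derivative ℝ) ((PowerSeries.derivative ℝ) (Us q * Vs))))
    + PowerSeries.C 4 * (PowerSeries.X * (PowerSeries.X * (PowerSeries.X * (PowerSeries.derivative ℝ) ((PowerSeries.derivative ℝ) (Us q * Vs)))))
    + PowerSeries.C 4 * (PowerSeries.derivative ℝ) (Us q * Vs)
    + PowerSeries.C (8*q) * (PowerSeries.X * (PowerSeries.derivative ℝ) (Us q * Vs)) - PowerSeries.C 8 * (PowerSeries.X * (PowerSeries.derivative ℝ) (Us q * Vs))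
    + PowerSeries.C 4 * (PowerSeries.X * (PowerSeries.X * (PowerSeries.derivative ℝ) (Us q * Vs))) - PowerSeries.C (8*q) * (PowerSeries.X * (PowerSeries.X * (PowerSeries.derivative ℝ) (Us q * Vs)))
    + PowerSeries.C (4*q) * (Us q * Vs) + Us q * Vs
    + PowerSeries.C (4*q^2) * (PowerSeries.X * (Us q * Vs)) - PowerSeries.X * (Us q * Vs) = 0 := by
  simp only [map_sub, map_add, map_mul, map_ofNat, map_one, map_neg, map_pow]
  linear_combination (4*(PowerSeries.X:PowerSeries ℝ) - 8*PowerSeries.X^2 + 4*PowerSeries.X^3) * hC2 q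
    + ((4:PowerSeries ℝ) + (8*(PowerSeries.C q)-8)*PowerSeries.X + (4-8*(PowerSeries.C q))*PowerSeries.X^2) * hC1 q
    + ((1-PowerSeries.X) * Us q) * hVq
    + (8*(PowerSeries.X*((1-PowerSeries.X)*(PowerSeries.derivative ℝ) Vs)) + 4*(PowerSeries.X*((1-(PowerSeries.C q))*Vs)) + 4*((2*(PowerSeries.C q)*PowerSeries.X+1-PowerSeries.X)*Vs)) * hUq q
    + (4*(PowerSeries.X*((1-PowerSeries.X)*Vs))) * hU2q q

lemma cseq_rec (q : ℝ) (m : ℕ) :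
    4*((m:ℝ)+2)^2 * cseq q (m+2)
      + (-8*((m:ℝ)+1)*(m:ℝ) + (8*q-8)*((m:ℝ)+1) + 4*q+1) * cseq q (m+1)
      + (4*(m:ℝ)*((m:ℝ)-1) + (4-8*q)*(m:ℝ) + 4*q^2-1) * cseq q m = 0 := by
  have cX0 : ∀ f : PowerSeries ℝ, PowerSeries.coeff 0 (PowerSeries.X * f) = 0 := by
    intro f
    simp [PowerSeries.coeff_zero_eq_constantCoeff]
  have cC : ∀ j : ℕ, PowerSeries.coeff j (Us q * Vs) = cseq q j := coeff_UV q
  have cdC : ∀ j : ℕ, PowerSeries.coeff j ((PowerSeries.derivative ℝ) (Us q * Vs)) = cseq q (j+1) * ((j:ℝ)+1) := by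
    intro j
    rw [PowerSeries.coeff_derivative, cC]
    try push_cast
    try ring
  have cddC : ∀ j : ℕ, PowerSeries.coeff j ((PowerSeries.derivative ℝ) ((PowerSeries.derivative ℝ) (Us q * Vs)))
      = cseq q (j+2) * ((j:ℝ)+2) * ((j:ℝ)+1) := by
    intro j
    rw [PowerSeries.coeff_derivative, cdC]
    try push_cast
    try ring
  have h := congrArg (⇑(PowerSeries.coeff (m+1))) (hODE q)
  simp only [map_add, map_sub, map_zero, PowerSeries.coeff_C_mul,
    PowerSeries.coeff_succ_X_mul] at h
  cases m with
  | zero =>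
    rw [cX0, cX0, cX0, cddC, cdC 1, cdC 0, cC 1, cC 0] at h
    try skip
    push_cast at h ⊢
    linear_combination h
  | succ k =>
    rw [PowerSeries.coeff_succ_X_mul, PowerSeries.coeff_succ_X_mul, cddC, cddC, cdC, cdC,
      PowerSeries.coeff_succ_X_mul, cdC, cC, cC] at h
    cases k with
    | zero =>
      rw [cX0] at h
      push_cast at h ⊢
      linear_combination h
    | succ j =>
      rw [PowerSeries.coeff_succ_X_mul, cddC] at h
      push_cast at h ⊢
      linear_combination h


lemma seq_eq_zero_of_tsum_eq_zero (d : ℕ → ℝ) (K : ℝ)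
    (hbound : ∀ n, |d n| ≤ K * 4^n)
    (hzero : ∀ x : ℝ, 0 < x → x ≤ 1/8 → (∑' n, d n * x^n) = 0) :
    ∀ n, d n = 0 := by
  have hK : 0 ≤ K := by
    have := (abs_nonneg (d 0)).trans (hbound 0)
    simpa using this
  intro n
  induction n using Nat.strong_induction_on with
  | _ n ih =>
    set C : ℝ := K * 4^(n+1) * 2 with hC
    have hC0 : 0 ≤ C := by positivity
    have main : ∀ x : ℝ, 0 < x → x ≤ 1/8 → |d n| ≤ x * C := by
      intro x hx0 hx8
      have hgeom : ∀ (j : ℕ), Summable (fun k : ℕ => K * 4^j * (1/2:ℝ)^k) :=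
        fun j => (summable_geometric_of_lt_one (by norm_num) (by norm_num)).mul_left _
      have hterm : ∀ (j k : ℕ), |d (k + j) * x^k| ≤ K * 4^j * (1/2:ℝ)^k := by
        intro j k
        rw [abs_mul, abs_pow, abs_of_pos hx0]
        have h1 : |d (k+j)| ≤ K * 4^(k+j) := hbound _
        have h2 : x^k ≤ (1/8:ℝ)^k := pow_le_pow_left₀ hx0.le hx8 k
        have h3 : (0:ℝ) ≤ x^k := by positivity
        calc |d (k+j)| * x^k ≤ K * 4^(k+j) * (1/8:ℝ)^k := by
              apply mul_le_mul h1 h2 h3 (by positivity)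
          _ = K * 4^j * (1/2:ℝ)^k := by
              rw [pow_add]
              rw [show ((1:ℝ)/2) = 4 * (1/8) by norm_num, mul_pow]
              ring
      have hsum : ∀ j : ℕ, Summable (fun k : ℕ => d (k + j) * x^k) := by
        intro j
        exact Summable.of_norm ((hgeom j).of_nonneg_of_le (fun k => norm_nonneg _)
          (fun k => hterm j k))
      -- full summability
      have hsfull : Summable (fun k : ℕ => d k * x^k) := by
        simpa using hsum 0
      have hsplit := (Summable.sum_add_tsum_nat_add (f := fun k => d k * x^k) n hsfull).symm
      rw [hzero x hx0 hx8] at hsplit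
      have hfin : (∑ i ∈ Finset.range n, d i * x^i) = 0 := by
        apply Finset.sum_eq_zero
        intro i hi
        rw [ih i (Finset.mem_range.1 hi), zero_mul]
      rw [hfin, zero_add] at hsplit
      -- hsplit : ∑' i, d (i+n) * x^(i+n) = 0
      have hfact : (fun i : ℕ => d (i + n) * x^(i+n)) = fun i => x^n * (d (i+n) * x^i) := by
        funext i
        rw [pow_add]
        ring
      rw [hfact, tsum_mul_left] at hsplit
      have hxn : x^n ≠ 0 := by positivity
      have hT : (∑' i : ℕ, d (i + n) * x^i) = 0 := by
        rcases mul_eq_zero.1 hsplit.symm with h | h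
        · exact absurd h hxn
        · exact h
      have hsplit2 := Summable.tsum_eq_zero_add (hsum n)
      rw [hT] at hsplit2
      simp only [pow_zero, mul_one, zero_add] at hsplit2
      -- 0 = d n + ∑' k, d (k+1+n) * x^(k+1)
      have hfact2 : (fun k : ℕ => d (k + 1 + n) * x^(k+1)) = fun k => x * (d (k + (n+1)) * x^k) := by
        funext k
        rw [pow_succ]
        rw [show k + 1 + n = k + (n+1) by omega]
        ring
      rw [hfact2, tsum_mul_left] at hsplit2
      have hgs : HasSum (fun k : ℕ => K * 4^(n+1) * (1/2:ℝ)^k) C := by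
        have h := hasSum_geometric_of_lt_one (r := (1/2:ℝ)) (by norm_num) (by norm_num)
        norm_num at h
        have := h.mul_left (K * 4^(n+1))
        simpa [hC, mul_assoc] using this
      have hbnd : |∑' k : ℕ, d (k + (n+1)) * x^k| ≤ C := by
        have := tsum_of_norm_bounded (f := fun k : ℕ => d (k + (n+1)) * x^k) hgs (fun k => hterm (n+1) k)
        simpa using this
      have : d n = -(x * ∑' k : ℕ, d (k + (n+1)) * x^k) := by linarith [hsplit2.symm]
      rw [this, abs_neg, abs_mul, abs_of_pos hx0]
      exact mul_le_mul_of_nonneg_left hbnd hx0.le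
    by_contra hne
    have hpos : 0 < |d n| := abs_pos.2 hne
    set x : ℝ := min (1/8) (|d n| / (2*(C+1))) with hx
    have hx0 : 0 < x := lt_min (by norm_num) (by positivity)
    have hx8 : x ≤ 1/8 := min_le_left _ _
    have h2 : x ≤ |d n| / (2*(C+1)) := min_le_right _ _
    have h3 := main x hx0 hx8
    have h4 : x * C ≤ (|d n| / (2*(C+1))) * C :=
      mul_le_mul_of_nonneg_right h2 hC0
    have h5 : (|d n| / (2*(C+1))) * C < |d n| := by
      rw [div_mul_eq_mul_div, div_lt_iff₀ (by positivity)]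
      nlinarith [hpos]
    linarith

end lemmas
theorem ellE_expansion_recurrence (p : ℝ) (b : ℕ → ℝ)
    (hb : ∀ r : ℝ, |r| < 1 →
      (1 - r ^ 2) ^ (p / 2) * ellE r = (Real.pi / 2) * ∑' n : ℕ, b n * r ^ (2 * n)) :
    b 0 = 1 ∧ b 1 = -p / 2 - 1 / 4 ∧
      ∀ n : ℕ, 1 ≤ n →
        b (n + 1) = (1 / 4) * ((8 * (n : ℝ) ^ 2 - 4 * p * (n : ℝ) - 2 * p - 1)
              / ((n : ℝ) + 1) ^ 2) * b n
          - (1 / 4) * ((2 * (n : ℝ) - p - 1) * (2 * (n : ℝ) - p - 3)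
              / ((n : ℝ) + 1) ^ 2) * b (n - 1) := by
  have hpi : (Real.pi / 2) ≠ 0 := by positivity
  have hval : ∀ x : ℝ, 0 ≤ x → x < 1 →
      (∑' n : ℕ, b n * x ^ n) = ∑' n : ℕ, cseq (p/2) n * x ^ n := by
    intro x hx0 hx1
    have hrs : Real.sqrt x < 1 := by
      rw [show (1:ℝ) = Real.sqrt 1 by simp]
      exact Real.sqrt_lt_sqrt hx0 (by simpa using hx1)
    have habs : |Real.sqrt x| < 1 := by rwa [abs_of_nonneg (Real.sqrt_nonneg x)]
    have hb' := hb (Real.sqrt x) habs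
    have hsq : Real.sqrt x ^ 2 = x := Real.sq_sqrt hx0
    simp only [ellE] at hb'
    rw [hsq] at hb'
    have hcongr : (∑' n : ℕ, b n * Real.sqrt x ^ (2*n)) = ∑' n : ℕ, b n * x ^ n :=
      tsum_congr (fun n => by rw [pow_mul, hsq])
    rw [hcongr] at hb'
    have hcs := (hasSum_cseq (p/2) (x := x) (by rwa [abs_of_nonneg hx0])).tsum_eq
    apply mul_left_cancel₀ hpi
    rw [← hb', hcs]
    ring
  have q14 : |(1/4 : ℝ)| < 1 := by rw [abs_lt]; constructor <;> norm_num
  have hcs14 := hasSum_cseq (p/2) q14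
  have hyppos : 0 < hypF (-(1/2)) (1/2) 1 (1/4) := by
    rw [hypF_eq_tsum_vb]
    have hsummable : Summable (fun n : ℕ => vb n * (1/4:ℝ)^n) := (summable_norm_vb q14).of_norm
    rw [Summable.tsum_eq_zero_add hsummable]
    have hgs : HasSum (fun n : ℕ => (1/4:ℝ) * (1/4:ℝ)^n) (1/3) := by
      have h := hasSum_geometric_of_lt_one (r := (1/4:ℝ)) (by norm_num) (by norm_num)
      have h2 := h.mul_left (1/4:ℝ)
      rw [show (1/3:ℝ) = 1/4 * (1 - 1/4)⁻¹ by norm_num]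
      exact h2
    have htail : |∑' n : ℕ, vb (n+1) * (1/4:ℝ)^(n+1)| ≤ 1/3 := by
      have hbnd : ∀ n : ℕ, ‖vb (n+1) * (1/4:ℝ)^(n+1)‖ ≤ (1/4:ℝ) * (1/4:ℝ)^n := by
        intro n
        rw [Real.norm_eq_abs, abs_mul, abs_pow, pow_succ]
        have h1 := abs_vb_le_one (n+1)
        have h2 : |(1/4:ℝ)| = 1/4 := by norm_num
        rw [h2]
        nlinarith [pow_nonneg (show (0:ℝ) ≤ 1/4 by norm_num) n, abs_nonneg (vb (n+1))]
      have := tsum_of_norm_bounded (f := fun n : ℕ => vb (n+1) * (1/4:ℝ)^(n+1)) hgs hbnd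
      simpa using this
    have habs := abs_le.1 htail
    rw [vb_zero]
    norm_num
    linarith [habs.1]
  have hval14ne : (∑' n : ℕ, cseq (p/2) n * (1/4:ℝ)^n) ≠ 0 := by
    rw [hcs14.tsum_eq]
    have h1 : (0:ℝ) < (1 - 1/4 : ℝ) ^ (p/2) := Real.rpow_pos_of_pos (by norm_num) _
    exact (mul_pos h1 hyppos).ne'
  have hbsum14 : Summable (fun n : ℕ => b n * (1/4:ℝ)^n) := by
    by_contra h
    have h0 := tsum_eq_zero_of_not_summable h
    rw [hval (1/4) (by norm_num) (by norm_num)] at h0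
    exact hval14ne h0
  have bound_of_summable : ∀ f : ℕ → ℝ, Summable (fun n : ℕ => f n * (1/4:ℝ)^n) →
      ∃ M : ℝ, ∀ n, |f n| ≤ M * 4^n := by
    intro f hf
    have ht := hf.tendsto_atTop_zero
    have habs : Filter.Tendsto (fun n => |f n * (1/4:ℝ)^n|) Filter.atTop (nhds 0) := by
      have := ht.abs
      simpa using this
    obtain ⟨M, hM⟩ := habs.bddAbove_range
    refine ⟨M, fun n => ?_⟩
    have h1 : |f n * (1/4:ℝ)^n| ≤ M := hM ⟨n, rfl⟩
    rw [abs_mul, abs_pow, show |(1/4:ℝ)| = 1/4 by norm_num] at h1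
    have h2 : |f n| = |f n| * (1/4:ℝ)^n * 4^n := by
      rw [mul_assoc, ← mul_pow]
      norm_num
    rw [h2]
    exact mul_le_mul_of_nonneg_right h1 (by positivity)
  obtain ⟨M, hM⟩ := bound_of_summable b hbsum14
  obtain ⟨M', hM'⟩ := bound_of_summable (cseq (p/2)) hcs14.summable
  have hzero : ∀ x : ℝ, 0 < x → x ≤ 1/8 →
      (∑' n : ℕ, (b n - cseq (p/2) n) * x^n) = 0 := by
    intro x hx0 hx8
    have hx1 : |x| < 1 := by rw [abs_of_pos hx0]; linarith
    have hbs : Summable (fun n : ℕ => b n * x^n) := by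
      apply Summable.of_norm
      have hgs : Summable (fun n : ℕ => M * (1/2:ℝ)^n) :=
        (summable_geometric_of_lt_one (by norm_num) (by norm_num)).mul_left M
      refine hgs.of_nonneg_of_le (fun n => norm_nonneg _) (fun n => ?_)
      rw [Real.norm_eq_abs, abs_mul, abs_pow, abs_of_pos hx0]
      have h1 : |b n| * x^n ≤ (M * 4^n) * x^n :=
        mul_le_mul_of_nonneg_right (hM n) (by positivity)
      have h2 : (M * 4^n) * x^n = M * (4*x)^n := by rw [mul_pow]; ring
      have h3 : (4*x)^n ≤ (1/2:ℝ)^n := by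
        apply pow_le_pow_left₀ (by positivity) (by linarith)
      have hMnn : 0 ≤ M := le_trans (abs_nonneg (b 0)) (by simpa using hM 0)
      calc |b n| * x^n ≤ M * (4*x)^n := by rw [← h2]; exact h1
        _ ≤ M * (1/2:ℝ)^n := mul_le_mul_of_nonneg_left h3 hMnn
    have hcs : Summable (fun n : ℕ => cseq (p/2) n * x^n) := (hasSum_cseq (p/2) hx1).summable
    have : (fun n : ℕ => (b n - cseq (p/2) n) * x^n)
        = fun n => b n * x^n - cseq (p/2) n * x^n := by funext n; ring
    rw [this, Summable.tsum_sub hbs hcs, hval x hx0.le (by linarith), sub_self]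
  have hdz := seq_eq_zero_of_tsum_eq_zero (fun n => b n - cseq (p/2) n) (M + M')
    (fun n => by
      have h1 := hM n
      have h2 := hM' n
      have := abs_sub (b n) (cseq (p/2) n)
      calc |b n - cseq (p/2) n| ≤ |b n| + |cseq (p/2) n| := abs_sub _ _
        _ ≤ M * 4^n + M' * 4^n := add_le_add h1 h2
        _ = (M + M') * 4^n := by ring)
    hzero
  have hbc : ∀ n, b n = cseq (p/2) n := by
    intro n
    have := hdz n
    linarith [this]
  have c0 : cseq (p/2) 0 = 1 := by
    rw [cseq, Finset.sum_range_one]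
    rw [show ub (p/2) 0 = 1 from rfl, vb_zero]
    norm_num
  have hvb1 : vb 1 = -(1/4) := by
    have := vb_succ 0
    rw [vb_zero] at this
    push_cast at this
    rw [this]
    norm_num
  have hub1 : ub (p/2) 1 = -(p/2) := by
    rw [show ub (p/2) 1 = ub (p/2) 0 * ((0:ℕ) - (p/2)) / ((0:ℕ)+1) from rfl,
      show ub (p/2) 0 = 1 from rfl]
    push_cast
    ring
  have c1 : cseq (p/2) 1 = -p/2 - 1/4 := by
    rw [cseq, Finset.sum_range_succ, Finset.sum_range_one,
      show (1:ℕ) - 0 = 1 from rfl, show (1:ℕ) - 1 = 0 from rfl, hvb1, hub1, vb_zero,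
      show ub (p/2) 0 = 1 from rfl]
    ring
  refine ⟨by rw [hbc 0, c0], by rw [hbc 1, c1], ?_⟩
  intro n hn
  obtain ⟨m, rfl⟩ : ∃ m, n = m + 1 := ⟨n - 1, by omega⟩
  have h := cseq_rec (p/2) m
  have hne : ((m:ℝ) + 1 + 1) ≠ 0 := by positivity
  rw [show m + 1 - 1 = m from rfl, hbc (m+1+1), hbc (m+1), hbc m]
  push_cast
  push_cast at h
  field_simp
  ring_nf
  ring_nf at h
  linarith [h]
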